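/- (Chvátal–Erdős) Let G be a k-connected graph of order n ≥ 3. If the independence number of G is at most k, then G is Hamiltonian. -/

import Mathlib

open Finset List

namespace List
variable {α : Type*} {R : α → α → Prop}
@[simp] theorem chain_cons₀ {a b : α} {l : List α} : Chain R a (b :: l) ↔ R a b ∧ Chain R b l :=
  isChain_cons_cons
@[simp] theorem chain_nil₀ {a : α} : Chain R a [] ↔ True := by simp [Chain]
@[simp] theorem chain_singleton {a b : α} : Chain R a [b] ↔ R a b := by simp [Chain]
theorem chain_split {a b : α} {l₁ l₂ : List α} :
    Chain R a (l₁ ++ b :: l₂) ↔ Chain R a (l₁ ++ [b]) ∧ Chain R b l₂ := isChain_cons_split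
theorem chain'_reverse {l : List α} : Chain' R (reverse l) ↔ Chain' (flip R) l := isChain_reverse
theorem chain'_append {l₁ l₂ : List α} : Chain' R (l₁ ++ l₂) ↔
    Chain' R l₁ ∧ Chain' R l₂ ∧ ∀ x ∈ l₁.getLast?, ∀ y ∈ l₂.head?, R x y := isChain_append
end List

namespace CEhelp

variable {V : Type*} (G : SimpleGraph V)

/-- `a :: t` is a cycle in `G`: at least 3 vertices, no repeats, consecutive
vertices adjacent, and the last vertex adjacent back to `a`. -/
def CycList (a : V) (t : List V) : Prop :=
  2 ≤ t.length ∧ (a :: t).Nodup ∧ List.Chain G.Adj a (t ++ [a])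

variable {G}
set_option linter.unusedSectionVars false
variable [DecidableEq V]

lemma CycList.rotate {a b : V} {t₁ t₂ : List V} (h : CycList G a (t₁ ++ b :: t₂)) :
    CycList G b (t₂ ++ a :: t₁) := by
  obtain ⟨hlen, hnd, hch⟩ := h
  refine ⟨by simp at hlen ⊢; omega, ?_, ?_⟩
  · have hperm : (a :: (t₁ ++ b :: t₂)) ~ (b :: (t₂ ++ a :: t₁)) := by
      calc a :: (t₁ ++ b :: t₂) = (a :: t₁) ++ (b :: t₂) := by simp
      _ ~ (b :: t₂) ++ (a :: t₁) := List.perm_append_comm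
      _ = b :: (t₂ ++ a :: t₁) := by simp
    exact hperm.nodup hnd
  · have h1 : List.Chain G.Adj a (t₁ ++ b :: (t₂ ++ [a])) := by
      simpa using hch
    rw [List.chain_split] at h1
    have : List.Chain G.Adj b (t₂ ++ a :: (t₁ ++ [b])) := by
      rw [List.chain_split]
      exact ⟨h1.2, h1.1⟩
    simpa using this

lemma CycList.length3 {a : V} {t : List V} (h : CycList G a t) : 3 ≤ (a :: t).length := by
  have := h.1; simp; omega

/-- Rotate a cycle so that a given vertex `v` becomes the head; the new second
element is `List.next` of `v` in the original list. -/
lemma CycList.exists_rot {a v : V} {t : List V} (h : CycList G a t) (hv : v ∈ a :: t) :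
    ∃ w T, CycList G v (w :: T) ∧ (a :: t) ~r (v :: w :: T) ∧
      ∀ (hv' : v ∈ a :: t), (a :: t).next v hv' = w := by
  have hnd := h.2.1
  rcases List.mem_cons.mp hv with rfl | hvt
  · obtain ⟨w, T, rfl⟩ := List.exists_cons_of_ne_nil
      (show t ≠ [] by intro ht; rw [ht] at h; simpa using h.1)
    exact ⟨w, T, h, IsRotated.refl _, fun hv' => List.next_cons_cons_eq _ _ _ _⟩
  · obtain ⟨t₁, t₂, rfl⟩ := List.append_of_mem hvt
    obtain ⟨w, T, hwT⟩ := List.exists_cons_of_ne_nil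
      (show t₂ ++ a :: t₁ ≠ [] by simp)
    have hrot : (a :: (t₁ ++ v :: t₂)) ~r (v :: (t₂ ++ a :: t₁)) := by
      have : (a :: t₁) ++ (v :: t₂) ~r (v :: t₂) ++ (a :: t₁) := List.isRotated_append
      simpa using this
    rw [hwT] at hrot
    refine ⟨w, T, ?_, hrot, ?_⟩
    · have := h.rotate; rwa [hwT] at this
    · intro hv'
      have := List.isRotated_next_eq hrot hnd (x := v) (by simp)
      exact this.trans (List.next_cons_cons_eq _ _ _ _)

lemma chain_of_path {P : List V} {a w x y : V} (hh : P.head? = some x)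
    (hl : P.getLast? = some y) (hax : G.Adj a x) (hc : P.Chain' G.Adj) (hyw : G.Adj y w) :
    List.Chain G.Adj a (P ++ [w]) := by
  rcases P with _ | ⟨p0, P'⟩
  · simp at hh
  · simp only [List.head?_cons, Option.some_inj] at hh
    rw [List.cons_append, List.chain_cons₀]
    refine ⟨hh ▸ hax, ?_⟩
    show List.Chain' G.Adj ((p0 :: P') ++ [w])
    rw [List.chain'_append]
    refine ⟨hc, List.isChain_singleton _, ?_⟩
    intro z hz u hu
    rw [List.head?_cons, Option.mem_def, Option.some_inj] at hu
    rw [Option.mem_def, hl, Option.some_inj] at hz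
    rw [← hu, ← hz]
    exact hyw

lemma chain_reverse {l : List V} {u v : V} (h : List.Chain G.Adj u (l ++ [v])) :
    List.Chain G.Adj v (l.reverse ++ [u]) := by
  have h1 : List.Chain' G.Adj (u :: (l ++ [v])) := h
  have h2 : List.Chain' G.Adj ((u :: (l ++ [v])).reverse) := by
    rw [List.chain'_reverse]
    convert h1 using 2
    ext x y
    exact G.adj_comm y x
  have h3 : (u :: (l ++ [v])).reverse = v :: (l.reverse ++ [u]) := by simp
  rw [h3] at h2
  exact h2

/-- Build a walk along a chain of adjacent vertices. -/
def walkOfChain : ∀ (a b : V) (l : List V), List.Chain G.Adj a (l ++ [b]) → G.Walk a b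
  | _, _, [], h => SimpleGraph.Walk.cons (by simpa using h) SimpleGraph.Walk.nil
  | a, b, c :: l, h =>
    SimpleGraph.Walk.cons (List.chain_cons₀.mp h).1 (walkOfChain c b l (List.chain_cons₀.mp h).2)

@[simp] lemma walkOfChain_support (a b : V) (l : List V) (h : List.Chain G.Adj a (l ++ [b])) :
    (walkOfChain a b l h).support = a :: l ++ [b] := by
  induction l generalizing a with
  | nil => simp [walkOfChain]
  | cons c l ih => simp [walkOfChain, ih]

lemma walkOfChain_edges (a b : V) (l : List V) (h : List.Chain G.Adj a (l ++ [b]))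
    {x : V} (hb : b ∉ a :: l) (he : s(b, x) ∈ (walkOfChain a b l h).edges) :
    x = (a :: l).getLast (List.cons_ne_nil _ _) := by
  induction l generalizing a with
  | nil =>
    simp only [walkOfChain, SimpleGraph.Walk.edges_cons, SimpleGraph.Walk.edges_nil,
      List.mem_singleton] at he
    rw [Sym2.eq_iff] at he
    rcases he with ⟨h1, h2⟩ | ⟨h1, h2⟩
    · exact absurd h1 (by simpa using hb)
    · simp [h2]
  | cons c l ih =>
    simp only [walkOfChain, SimpleGraph.Walk.edges_cons, List.mem_cons] at he
    rcases he with he | he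
    · exfalso
      rw [Sym2.eq_iff] at he
      rcases he with ⟨h1, h2⟩ | ⟨h1, h2⟩
      · exact hb (h1 ▸ List.mem_cons_self)
      · exact hb (by rw [h1]; exact List.mem_cons_of_mem _ (List.mem_cons_self))
    · have : x = (c :: l).getLast (List.cons_ne_nil _ _) :=
        ih c (List.chain_cons₀.mp h).2 (fun hmem => hb (List.mem_cons_of_mem _ hmem)) he
      rw [this]
      exact (List.getLast_cons_cons).symm ▸ rfl

lemma CycList.isHamiltonian [Fintype V] {a : V} {t : List V} (h : CycList G a t)
    (hcov : ∀ v : V, v ∈ a :: t) : G.IsHamiltonian := by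
  intro _
  obtain ⟨hlen, hnd, hch⟩ := h
  obtain ⟨c, t'', rfl⟩ := List.exists_cons_of_ne_nil (show t ≠ [] by
    intro ht; rw [ht] at hlen; simp at hlen)
  have hch' : List.Chain G.Adj a (c :: (t'' ++ [a])) := by simpa using hch
  rw [List.chain_cons₀] at hch'
  obtain ⟨hac, hchain⟩ := hch'
  set p : G.Walk c a := walkOfChain c a t'' hchain with hp
  have hsupp : p.support = c :: t'' ++ [a] := walkOfChain_support _ _ _ _
  have ht'' : t'' ≠ [] := by intro ht; rw [ht] at hlen; simp at hlen
  have hnd2 : (c :: t'' ++ [a]).Nodup := by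
    have hperm : (c :: t'' ++ [a]) ~ (a :: c :: t'') := by
      calc (c :: t'') ++ [a] ~ [a] ++ (c :: t'') := List.perm_append_comm
      _ = a :: c :: t'' := by simp
    exact hperm.symm.nodup hnd
  have hpath : p.IsPath := by
    rw [SimpleGraph.Walk.isPath_def, hsupp]
    exact hnd2
  have hcyc : (SimpleGraph.Walk.cons hac p).IsCycle := by
    rw [SimpleGraph.Walk.cons_isCycle_iff]
    refine ⟨hpath, fun he => ?_⟩
    have hxa := walkOfChain_edges c a t'' hchain
      (by intro hmem; exact (List.nodup_cons.mp hnd).1 hmem) he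
    obtain ⟨d, t₃, rfl⟩ := List.exists_cons_of_ne_nil ht''
    have hmem : (c :: d :: t₃).getLast (List.cons_ne_nil _ _) ∈ d :: t₃ := by
      rw [List.getLast_cons (List.cons_ne_nil d t₃)]
      exact List.getLast_mem _
    have hcmem : c ∈ d :: t₃ := by rw [hxa]; exact hmem
    exact (List.nodup_cons.mp (List.nodup_cons.mp hnd).2).1 hcmem
  refine ⟨a, SimpleGraph.Walk.cons hac p, ?_⟩
  rw [SimpleGraph.Walk.isHamiltonianCycle_iff_isCycle_and_support_count_tail_eq_one]
  refine ⟨hcyc, fun v => ?_⟩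
  have : (SimpleGraph.Walk.cons hac p).support = a :: (c :: t'' ++ [a]) := by
    rw [SimpleGraph.Walk.support_cons, hsupp]
  rw [this]
  simp only [List.tail_cons]
  have hmemv : v ∈ c :: t'' ++ [a] := by
    rcases List.mem_cons.mp (hcov v) with rfl | hv
    · simp
    · simp only [List.cons_append, List.mem_cons, List.mem_append, List.mem_singleton] at hv ⊢
      tauto
  exact List.count_eq_one_of_mem hnd2 hmemv

lemma ext1 {a w : V} {T P : List V} (hC : CycList G a (w :: T)) (hPnd : P.Nodup)
    (hdisj : ∀ z ∈ P, z ∉ a :: w :: T) (hPc : P.Chain' G.Adj) {x y : V}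
    (hh : P.head? = some x) (hl : P.getLast? = some y) (hax : G.Adj a x) (hwy : G.Adj w y) :
    ∃ b s, CycList G b s ∧ (b :: s).length = (a :: w :: T).length + P.length := by
  obtain ⟨hlen, hnd, hch⟩ := hC
  have hP : P ≠ [] := by intro h; rw [h] at hh; simp at hh
  have hP1 : 1 ≤ P.length := List.length_pos_iff.mpr hP
  have hch1 : List.Chain G.Adj a (w :: (T ++ [a])) := by simpa using hch
  rw [List.chain_cons₀] at hch1
  refine ⟨w, T ++ a :: P, ⟨?_, ?_, ?_⟩, ?_⟩
  · simp; omega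
  · have hperm : (w :: (T ++ a :: P)) ~ ((a :: w :: T) ++ P) := by
      rw [List.perm_iff_count]
      intro z
      simp [List.count_append, List.count_cons]
      omega
    refine hperm.symm.nodup ?_
    rw [List.nodup_append]
    exact ⟨hnd, hPnd, fun z hz z' hz' hzz => hdisj z' hz' (hzz ▸ hz)⟩
  · have : List.Chain G.Adj w (T ++ a :: (P ++ [w])) := by
      rw [List.chain_split]
      exact ⟨hch1.2, chain_of_path hh hl hax hPc hwy.symm⟩
    simpa using this
  · simp; omega

lemma ext2 {a w b w' : V} {X Y P : List V} (hC : CycList G a (w :: (X ++ b :: w' :: Y)))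
    (hPnd : P.Nodup) (hdisj : ∀ z ∈ P, z ∉ a :: w :: (X ++ b :: w' :: Y))
    (hPc : P.Chain' G.Adj) {x y : V}
    (hh : P.head? = some x) (hl : P.getLast? = some y) (hax : G.Adj a x) (hby : G.Adj b y)
    (hww' : G.Adj w w') :
    ∃ c s, CycList G c s ∧
      (c :: s).length = (a :: w :: (X ++ b :: w' :: Y)).length + P.length := by
  obtain ⟨hlen, hnd, hch⟩ := hC
  have hP : P ≠ [] := by intro h; rw [h] at hh; simp at hh
  have hP1 : 1 ≤ P.length := List.length_pos_iff.mpr hP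
  have hch1 : List.Chain G.Adj a (w :: (X ++ b :: (w' :: (Y ++ [a])))) := by simpa using hch
  rw [List.chain_cons₀] at hch1
  obtain ⟨haw, hch2⟩ := hch1
  rw [List.chain_split] at hch2
  obtain ⟨hwXb, hch3⟩ := hch2
  rw [List.chain_cons₀] at hch3
  obtain ⟨hbw', hw'Ya⟩ := hch3
  refine ⟨w', Y ++ a :: P ++ b :: X.reverse ++ [w], ⟨?_, ?_, ?_⟩, ?_⟩
  · simp; omega
  · have hperm : (w' :: (Y ++ a :: P ++ b :: X.reverse ++ [w])) ~
        ((a :: w :: (X ++ b :: w' :: Y)) ++ P) := by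
      rw [List.perm_iff_count]
      intro z
      simp [List.count_append, List.count_cons, List.count_reverse]
      omega
    refine hperm.symm.nodup ?_
    rw [List.nodup_append]
    exact ⟨hnd, hPnd, fun z hz z' hz' hzz => hdisj z' hz' (hzz ▸ hz)⟩
  · have key : List.Chain G.Adj w' (Y ++ a :: (P ++ b :: (X.reverse ++ w :: [w']))) := by
      rw [List.chain_split]
      refine ⟨hw'Ya, ?_⟩
      rw [List.chain_split]
      refine ⟨chain_of_path hh hl hax hPc hby.symm, ?_⟩
      rw [List.chain_split]
      refine ⟨chain_reverse hwXb, ?_⟩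
      rw [List.chain_singleton]
      exact hww'
    have heq : (Y ++ a :: P ++ b :: X.reverse ++ [w]) ++ [w'] =
        Y ++ a :: (P ++ b :: (X.reverse ++ w :: [w'])) := by simp
    show List.Chain G.Adj w' ((Y ++ a :: P ++ b :: X.reverse ++ [w]) ++ [w'])
    rw [heq]
    exact key
  · simp; omega

lemma chain_ne_adj (hcomp : ∀ u v : V, u ≠ v → G.Adj u v) :
    ∀ (t : List V) (x a : V), x ∉ t → a ∉ t → t.Nodup → x ≠ a →
      List.Chain G.Adj x (t ++ [a]) := by
  intro t
  induction t with
  | nil => intro x a _ _ _ hxa; simpa using hcomp x a hxa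
  | cons c t ih =>
    intro x a hx ha hnd hxa
    rw [List.cons_append, List.chain_cons₀]
    refine ⟨hcomp x c (fun h => hx (h ▸ List.mem_cons_self)), ?_⟩
    exact ih c a (List.nodup_cons.mp hnd).1 (fun h => ha (List.mem_cons_of_mem _ h))
      (List.nodup_cons.mp hnd).2 (fun h => ha (h ▸ List.mem_cons_self))

lemma exists_pathlist_of_reachable {s : Set V} {x y : V} (hx : x ∈ s) (hy : y ∈ s)
    (hr : (G.induce s).Reachable ⟨x, hx⟩ ⟨y, hy⟩) :
    ∃ P : List V, P.Nodup ∧ P.Chain' G.Adj ∧ P.head? = some x ∧ P.getLast? = some y ∧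
      ∀ z ∈ P, ∃ hz : z ∈ s, (G.induce s).Reachable ⟨x, hx⟩ ⟨z, hz⟩ := by
  obtain ⟨w⟩ := hr
  classical
  set p : (G.induce s).Walk ⟨x, hx⟩ ⟨y, hy⟩ := (w.toPath : (G.induce s).Path _ _).val with hpdef
  have hp : p.IsPath := (w.toPath : (G.induce s).Path _ _).2
  set q : G.Walk x y := p.map (SimpleGraph.Embedding.induce s).toHom with hqdef
  refine ⟨q.support, ?_, q.isChain_adj_support, ?_, ?_, ?_⟩
  · erw [SimpleGraph.Walk.support_map]
    exact ((SimpleGraph.Walk.isPath_def _).mp hp).map Subtype.val_injective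
  · rw [SimpleGraph.Walk.support_eq_cons]; rfl
  · have := q.getLast_support
    rw [List.getLast?_eq_getLast (q.support_ne_nil), this]
  · intro z hz
    erw [SimpleGraph.Walk.support_map, List.mem_map] at hz
    obtain ⟨u, hu, rfl⟩ := hz
    refine ⟨u.2, ?_⟩
    have : (G.induce s).Reachable ⟨x, hx⟩ u := ⟨p.takeUntil u hu⟩
    exact this

end CEhelp

open Finset

/-- `G` is `k`-connected: more than `k` vertices, and deleting fewer than `k`
vertices leaves a connected graph. -/
def KConnected {V : Type*} [Fintype V] (k : ℕ) (G : SimpleGraph V) : Prop :=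
  k < Fintype.card V ∧
    ∀ S : Finset V, S.card < k → (G.induce ((↑S : Set V)ᶜ)).Connected

namespace CEhelp

variable {V : Type*} [Fintype V] [DecidableEq V] {G : SimpleGraph V} {k : ℕ}

lemma min_degree (hconn : KConnected k G) (v : V) (N : Finset V)
    (hN : ∀ u, G.Adj v u → u ∈ N) (hvN : v ∉ N) : k ≤ N.card := by
  by_contra hlt
  push_neg at hlt
  have conn := hconn.2 N hlt
  have hv : v ∈ ((↑N : Set V)ᶜ : Set V) := hvN
  have hcompl : ((insert v N)ᶜ : Finset V).Nonempty := by
    rw [← Finset.card_pos, Finset.card_compl]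
    have h1 : (insert v N).card ≤ N.card + 1 := Finset.card_insert_le _ _
    have := hconn.1
    omega
  obtain ⟨w, hw⟩ := hcompl
  rw [Finset.mem_compl, Finset.mem_insert, not_or] at hw
  have hwN : w ∈ ((↑N : Set V)ᶜ : Set V) := hw.2
  obtain ⟨p⟩ := conn.preconnected ⟨v, hv⟩ ⟨w, hwN⟩
  cases p with
  | nil => exact hw.1 rfl
  | cons hadj q =>
    rename_i m
    have : G.Adj v m.val := hadj
    exact m.2 (hN _ this)

lemma cycle_exists (hk2 : 2 ≤ k) (hconn : KConnected k G) :
    ∃ a t, CycList G a t := by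
  classical
  have hVpos : 0 < Fintype.card V := by have := hconn.1; omega
  obtain ⟨v₀⟩ := Fintype.card_pos_iff.mp hVpos
  set PP : ℕ → Prop := fun m => ∃ l : List V, l ≠ [] ∧ l.Nodup ∧ l.Chain' G.Adj ∧ l.length = m
    with hPP
  have h1 : PP 1 := ⟨[v₀], by simp [List.Chain']⟩
  set M := Nat.findGreatest PP (Fintype.card V) with hM
  have hMspec : PP M := Nat.findGreatest_spec (show 1 ≤ Fintype.card V by omega) h1
  have hmax : ∀ l : List V, l ≠ [] → l.Nodup → l.Chain' G.Adj → l.length ≤ M := by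
    intro l h1 h2 h3
    exact Nat.le_findGreatest h2.length_le_card ⟨l, h1, h2, h3, rfl⟩
  obtain ⟨l, hlne, hlnd, hlch, hllen⟩ := hMspec
  obtain ⟨x, r, rfl⟩ := List.exists_cons_of_ne_nil hlne
  have hnb : ∀ y, G.Adj x y → y ∈ x :: r := by
    intro y hy
    by_contra hy'
    have hPP' : (y :: x :: r).length ≤ M :=
      hmax _ (List.cons_ne_nil _ _) (List.nodup_cons.mpr ⟨hy', hlnd⟩)
        (List.isChain_cons.mpr ⟨by intro z hz; simp at hz; rw [← hz]; exact hy.symm, hlch⟩)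
    have hlen2 : (y :: x :: r).length = (x :: r).length + 1 := rfl
    omega
  -- r is nonempty: x has a neighbor
  have hr : r ≠ [] := by
    intro hr0
    have := min_degree hconn x (∅ : Finset V) ?_ (by simp)
    · simp at this; omega
    · intro u hu
      have := hnb u hu
      rw [hr0] at this
      simp at this
      exact absurd (this ▸ hu) (G.loopless.irrefl x)
  obtain ⟨r0, r', rfl⟩ := List.exists_cons_of_ne_nil hr
  -- x has a neighbor other than r0
  have hy : ∃ y, G.Adj x y ∧ y ≠ r0 := by
    by_contra hno
    push_neg at hno
    have := min_degree hconn x ({r0} : Finset V) ?_ ?_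
    · simp at this; omega
    · intro u hu
      simp [hno u hu]
    · simp
      intro h
      rw [h] at hlnd
      simp at hlnd
  obtain ⟨y, hxy, hyr0⟩ := hy
  have hyr : y ∈ r' := by
    have := hnb y hxy
    rcases List.mem_cons.mp this with h | h
    · exact absurd h.symm hxy.ne
    · rcases List.mem_cons.mp h with h | h
      · exact absurd h hyr0
      · exact h
  obtain ⟨r₁, r₂, rfl⟩ := List.append_of_mem hyr
  refine ⟨x, r0 :: r₁ ++ [y], ⟨by simp, ?_, ?_⟩⟩
  · have hsub : (x :: r0 :: r₁) ++ [y] <+ (x :: r0 :: r₁) ++ y :: r₂ :=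
      List.Sublist.append_left (List.cons_sublist_cons.mpr (List.nil_sublist _)) _
    have hnd := hsub.nodup (by simpa using hlnd)
    simpa using hnd
  · have h0 : List.Chain G.Adj x ((r0 :: r₁) ++ y :: r₂) := hlch
    rw [List.chain_split] at h0
    have heq : (r0 :: r₁ ++ [y]) ++ [x] = (r0 :: r₁) ++ y :: [x] := by simp
    rw [heq, List.chain_split]
    exact ⟨h0.1, List.chain_singleton.mpr hxy.symm⟩

end CEhelp

theorem chvatal_erdos
    {V : Type*} [Fintype V] [DecidableEq V] (G : SimpleGraph V)
    (k : ℕ) (hconn : KConnected k G) (hn : 3 ≤ Fintype.card V)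
    (hindep : ∀ I : Finset V, (∀ u ∈ I, ∀ v ∈ I, ¬ G.Adj u v) → I.card ≤ k) :
    G.IsHamiltonian := by
  classical
  obtain ⟨v₀⟩ : Nonempty V := Fintype.card_pos_iff.mp (by omega)
  have hk1 : 1 ≤ k := by
    have h := hindep {v₀} (by
      intro u hu v hv
      simp only [Finset.mem_singleton] at hu hv
      rw [hu, hv]
      exact G.loopless.irrefl _)
    simpa using h
  by_cases hk : k = 1
  · -- G is complete
    subst hk
    have hcomp : ∀ u v : V, u ≠ v → G.Adj u v := by
      intro u v huv
      by_contra hadj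
      have h2 := hindep {u, v} ?_
      · rw [Finset.card_insert_of_notMem (by simp [huv]), Finset.card_singleton] at h2
        omega
      · intro x hx y hy
        simp only [Finset.mem_insert, Finset.mem_singleton] at hx hy
        rcases hx with rfl | rfl <;> rcases hy with rfl | rfl
        · exact G.loopless.irrefl _
        · exact hadj
        · exact fun h => hadj h.symm
        · exact G.loopless.irrefl _
    obtain ⟨a, t, hat⟩ : ∃ a t, (Finset.univ : Finset V).toList = a :: t := by
      rcases h : (Finset.univ : Finset V).toList with _ | ⟨a, t⟩
      · exfalso
        have h2 := Finset.length_toList (Finset.univ : Finset V)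
        rw [h] at h2
        rw [Finset.card_univ] at h2
        simp at h2
        omega
      · exact ⟨a, t, rfl⟩
    have hnd : (a :: t).Nodup := hat ▸ (Finset.nodup_toList _)
    have hlen : 2 ≤ t.length := by
      have h2 := Finset.length_toList (Finset.univ : Finset V)
      rw [hat, Finset.card_univ] at h2
      simp at h2
      omega
    obtain ⟨c, t', rfl⟩ := List.exists_cons_of_ne_nil
      (show t ≠ [] by intro h; rw [h] at hlen; simp at hlen)
    have hC : CEhelp.CycList G a (c :: t') := by
      refine ⟨hlen, hnd, ?_⟩
      rw [List.cons_append, List.chain_cons₀]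
      simp only [List.nodup_cons, List.mem_cons] at hnd
      constructor
      · exact hcomp a c (fun h => hnd.1 (Or.inl h))
      · exact CEhelp.chain_ne_adj hcomp t' c a hnd.2.1
          (fun h => hnd.1 (Or.inr h)) hnd.2.2
          (fun h => hnd.1 (Or.inl h.symm))
    exact hC.isHamiltonian (fun v => by
      rw [← hat]; exact Finset.mem_toList.mpr (Finset.mem_univ v))
  · -- k ≥ 2
    have hk2 : 2 ≤ k := by omega
    obtain ⟨a₁, t₁, hC1⟩ := CEhelp.cycle_exists hk2 hconn
    set PC : ℕ → Prop := fun m => ∃ a t, CEhelp.CycList G a t ∧ (a :: t).length = m with hPC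
    set ML := Nat.findGreatest PC (Fintype.card V) with hML
    have hMspec : PC ML :=
      Nat.findGreatest_spec (hC1.2.1.length_le_card) ⟨a₁, t₁, hC1, rfl⟩
    have hmaxC : ∀ b s, CEhelp.CycList G b s → (b :: s).length ≤ ML := by
      intro b s h
      exact Nat.le_findGreatest h.2.1.length_le_card ⟨b, s, h, rfl⟩
    obtain ⟨a, t, hC, hlenC⟩ := hMspec
    have hnd := hC.2.1
    by_cases hcov : ∀ v : V, v ∈ a :: t
    · exact hC.isHamiltonian hcov
    · exfalso
      push_neg at hcov
      obtain ⟨h0, hh0⟩ := hcov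
      set S : Finset V := (a :: t).toFinset with hS
      set sc : Set V := ((↑S : Set V)ᶜ) with hsc
      have hh0sc : h0 ∈ sc := by
        simp only [hsc, Set.mem_compl_iff, Finset.coe_sort_coe, Finset.mem_coe, hS,
          List.mem_toFinset]
        exact hh0
      set H : Set V := {z | ∃ hz : z ∈ sc, (G.induce sc).Reachable ⟨h0, hh0sc⟩ ⟨z, hz⟩}
        with hH
      have hH0 : h0 ∈ H := ⟨hh0sc, SimpleGraph.Reachable.refl _⟩
      have hHnotinL : ∀ z ∈ H, z ∉ a :: t := by
        intro z hz
        obtain ⟨hzs, _⟩ := hz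
        simp only [hsc, Set.mem_compl_iff, Finset.mem_coe, hS, List.mem_toFinset] at hzs
        exact hzs
      have hHclosed : ∀ z ∈ H, ∀ u, G.Adj z u → u ∉ a :: t → u ∈ H := by
        intro z hz u hadj hu
        obtain ⟨hzs, rz⟩ := hz
        have hus : u ∈ sc := by
          simp only [hsc, Set.mem_compl_iff, Finset.mem_coe, hS, List.mem_toFinset]
          exact hu
        have hedge : (G.induce sc).Adj ⟨z, hzs⟩ ⟨u, hus⟩ := hadj
        exact ⟨hus, rz.trans hedge.reachable⟩
      have hHpath : ∀ x y, x ∈ H → y ∈ H →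
          ∃ P : List V, P.Nodup ∧ P.Chain' G.Adj ∧ P.head? = some x ∧
            P.getLast? = some y ∧ ∀ z ∈ P, z ∈ H := by
        intro x y hx hy
        obtain ⟨hxs, rx⟩ := hx
        obtain ⟨hys, ry⟩ := hy
        obtain ⟨P, hnd', hch, hh, hl, hmem⟩ :=
          CEhelp.exists_pathlist_of_reachable hxs hys (rx.symm.trans ry)
        refine ⟨P, hnd', hch, hh, hl, ?_⟩
        intro z hz
        obtain ⟨hzs, rz⟩ := hmem z hz
        exact ⟨hzs, rx.trans rz⟩
      set A : Finset V := S.filter (fun c => ∃ z ∈ H, G.Adj c z) with hA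
      have hAS : A ⊆ S := Finset.filter_subset _ _
      have hAmem : ∀ c ∈ A, c ∈ a :: t ∧ ∃ z ∈ H, G.Adj c z := by
        intro c hc
        rw [hA, Finset.mem_filter] at hc
        exact ⟨by rw [← List.mem_toFinset]; exact hc.1, hc.2⟩
      have hAmem' : ∀ c, c ∈ a :: t → (∃ z ∈ H, G.Adj c z) → c ∈ A := by
        intro c h1 h2
        rw [hA, Finset.mem_filter]
        exact ⟨List.mem_toFinset.mpr h1, h2⟩
      set nxt : V → V := fun v => if hv : v ∈ a :: t then (a :: t).next v hv else v
        with hnxt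
      have hnxt_spec : ∀ v (hv : v ∈ a :: t), ∃ w T, CEhelp.CycList G v (w :: T) ∧
          (a :: t) ~r (v :: w :: T) ∧ nxt v = w := by
        intro v hv
        obtain ⟨w, T, h1, h2, h3⟩ := hC.exists_rot hv
        refine ⟨w, T, h1, h2, ?_⟩
        simp only [hnxt]
        rw [dif_pos hv]
        exact h3 hv
      have hnxt_mem : ∀ v ∈ a :: t, nxt v ∈ a :: t := by
        intro v hv
        obtain ⟨w, T, _, hrot, he⟩ := hnxt_spec v hv
        rw [he]
        exact hrot.mem_iff.mpr (by simp)
      have hnxt_adj : ∀ v, v ∈ a :: t → G.Adj v (nxt v) := by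
        intro v hv
        obtain ⟨w, T, h1, _, he⟩ := hnxt_spec v hv
        rw [he]
        have h2 := h1.2.2
        rw [List.cons_append, List.chain_cons₀] at h2
        exact h2.1
      have hnxt_inj : ∀ u v, u ∈ a :: t → v ∈ a :: t → nxt u = nxt v → u = v := by
        intro u v hu hv he
        have h1 : (a :: t).next u hu = (a :: t).next v hv := by
          have e1 : nxt u = (a :: t).next u hu := by simp only [hnxt]; rw [dif_pos hu]
          have e2 : nxt v = (a :: t).next v hv := by simp only [hnxt]; rw [dif_pos hv]
          rw [← e1, ← e2, he]
        have p1 := List.prev_next (a :: t) hnd u hu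
        have p2 := List.prev_next (a :: t) hnd v hv
        set F : {x // x ∈ (a :: t)} → V := fun x => (a :: t).prev x.1 x.2 with hF
        have hFF : F ⟨(a :: t).next u hu, List.next_mem _ _ _⟩ =
            F ⟨(a :: t).next v hv, List.next_mem _ _ _⟩ := by
          congr 1
          exact Subtype.ext h1
        rw [← p1, ← p2]
        exact hFF
      -- Step 1 : successors of attachment vertices are not attachment vertices
      have step1 : ∀ c ∈ A, nxt c ∉ A := by
        intro c hc hc'
        obtain ⟨hcL, z, hzH, hcz⟩ := hAmem c hc
        obtain ⟨z', hz'H, hcz'⟩ := (hAmem _ hc').2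
        obtain ⟨w, T, hCw, hrot, hw⟩ := hnxt_spec c hcL
        obtain ⟨P, hPnd, hPc, hPh, hPl, hPH⟩ := hHpath z z' hzH hz'H
        have hdisj : ∀ x ∈ P, x ∉ c :: w :: T := by
          intro x hx hx'
          exact hHnotinL x (hPH x hx) (hrot.mem_iff.mpr hx')
        obtain ⟨b2, s2, hC2, hlen2⟩ :=
          CEhelp.ext1 hCw hPnd hdisj hPc hPh hPl hcz (by rw [← hw]; exact hcz')
        have hle := hmaxC b2 s2 hC2
        have hPne : P ≠ [] := by intro h; rw [h] at hPh; simp at hPh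
        have hP1 : 1 ≤ P.length := List.length_pos_iff.mpr hPne
        have hlrot : (a :: t).length = (c :: w :: T).length := hrot.perm.length_eq
        omega
      -- Step 2 : A is big
      have step2 : k ≤ A.card := by
        by_contra hlt
        push_neg at hlt
        have conn := hconn.2 A hlt
        have hex : ∃ c ∈ a :: t, c ∉ A := by
          by_contra hno
          push_neg at hno
          exact step1 a (hno a (List.mem_cons_self))
            (hno _ (hnxt_mem a (List.mem_cons_self)))
        obtain ⟨c, hcL, hcA⟩ := hex
        have hcA' : c ∈ ((↑A : Set V)ᶜ : Set V) := hcA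
        have hh0A : h0 ∈ ((↑A : Set V)ᶜ : Set V) := by
          intro hmem
          exact hh0 (by
            have := hAS (Finset.mem_coe.mp hmem)
            rwa [hS, List.mem_toFinset] at this)
        obtain ⟨p⟩ := conn.preconnected ⟨h0, hh0A⟩ ⟨c, hcA'⟩
        have key : ∀ (u v : ((↑A : Set V)ᶜ : Set V))
            (w : (G.induce ((↑A : Set V)ᶜ)).Walk u v),
            u.val ∈ H → v.val ∈ a :: t → False := by
          intro u v w
          induction w with
          | nil => exact fun h1 h2 => hHnotinL _ h1 h2
          | cons hadj q ih =>
            rename_i u' m v'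
            intro h1 h2
            by_cases hm : m.val ∈ a :: t
            · have hmA : m.val ∈ A :=
                hAmem' m.val hm ⟨u'.val, h1, (show G.Adj u'.val m.val from hadj).symm⟩
              exact m.2 hmA
            · exact ih (hHclosed _ h1 _ (show G.Adj u'.val m.val from hadj) hm) h2
        exact key _ _ p hH0 hcL
      -- Step 3 : independent set of size A.card + 1
      set I : Finset V := insert h0 (A.image nxt) with hI
      have hinj : ∀ x ∈ A, ∀ y ∈ A, nxt x = nxt y → x = y := by
        intro x hx y hy
        exact hnxt_inj x y (hAmem x hx).1 (hAmem y hy).1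
      have hh0img : h0 ∉ A.image nxt := by
        intro hmem
        rw [Finset.mem_image] at hmem
        obtain ⟨c, hc, he⟩ := hmem
        exact hh0 (he ▸ hnxt_mem c (hAmem c hc).1)
      have hIcard : I.card = A.card + 1 := by
        rw [hI, Finset.card_insert_of_notMem hh0img, Finset.card_image_of_injOn hinj]
      have hIindep : ∀ u ∈ I, ∀ v ∈ I, ¬ G.Adj u v := by
        intro u hu v hv hadj
        rw [hI, Finset.mem_insert, Finset.mem_image] at hu hv
        rcases hu with hu0 | ⟨cu, hcu, rfl⟩
        · rcases hv with hv0 | ⟨cv, hcv, rfl⟩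
          · rw [hu0, hv0] at hadj
            exact G.loopless.irrefl _ hadj
          · rw [hu0] at hadj
            exact step1 cv hcv (hAmem' _ (hnxt_mem cv (hAmem cv hcv).1) ⟨h0, hH0, hadj.symm⟩)
        · rcases hv with hv0 | ⟨cv, hcv, rfl⟩
          · rw [hv0] at hadj
            exact step1 cu hcu (hAmem' _ (hnxt_mem cu (hAmem cu hcu).1) ⟨h0, hH0, hadj⟩)
          · -- two successors adjacent : crossing chord
            by_cases hcc : cu = cv
            · subst hcc
              exact G.loopless.irrefl _ hadj
            obtain ⟨hcuL, zu, hzuH, hcuz⟩ := hAmem cu hcu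
            obtain ⟨hcvL, zv, hzvH, hcvz⟩ := hAmem cv hcv
            obtain ⟨w, T, hCw, hrot, hw⟩ := hnxt_spec cu hcuL
            have hcvT : cv ∈ T := by
              have h1 : cv ∈ cu :: w :: T := hrot.mem_iff.mp hcvL
              rcases List.mem_cons.mp h1 with h | h
              · exact absurd h.symm hcc
              rcases List.mem_cons.mp h with h | h
              · exfalso
                apply step1 cu hcu
                rw [hw, ← h]
                exact hcv
              · exact h
            obtain ⟨X, Z, hXZ⟩ := List.append_of_mem hcvT
            subst hXZ
            rcases Z with _ | ⟨w2, Y⟩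
            · -- cv is the last vertex, so nxt cv = cu ∈ A, contradiction
              have hrot2 : (a :: t) ~r (cv :: cu :: w :: X) := by
                refine hrot.trans ?_
                have h3 : ((cu :: w :: X) ++ [cv]) ~r ([cv] ++ (cu :: w :: X)) :=
                  List.isRotated_append
                simpa using h3
              have hnext : nxt cv = cu := by
                simp only [hnxt]
                rw [dif_pos hcvL]
                have h4 := List.isRotated_next_eq hrot2 hnd (x := cv) hcvL
                rw [h4]
                exact List.next_cons_cons_eq _ _ _ _
              exact step1 cv hcv (by rw [hnext]; exact hcu)
            · -- general position : apply the crossing-chord extension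
              have hrot3 : (a :: t) ~r (cv :: w2 :: (Y ++ cu :: w :: X)) := by
                refine hrot.trans ?_
                have h3 : ((cu :: w :: X) ++ (cv :: w2 :: Y)) ~r
                    ((cv :: w2 :: Y) ++ (cu :: w :: X)) := List.isRotated_append
                simpa using h3
              have hnext2 : nxt cv = w2 := by
                simp only [hnxt]
                rw [dif_pos hcvL]
                have h4 := List.isRotated_next_eq hrot3 hnd (x := cv) hcvL
                rw [h4]
                exact List.next_cons_cons_eq _ _ _ _
              have hchord : G.Adj w w2 := by
                rw [← hw, ← hnext2]
                exact hadj
              obtain ⟨P, hPnd, hPc, hPh, hPl, hPH⟩ := hHpath zu zv hzuH hzvH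
              have hdisj : ∀ x ∈ P, x ∉ cu :: w :: (X ++ cv :: w2 :: Y) := by
                intro x hx hx'
                exact hHnotinL x (hPH x hx) (hrot.mem_iff.mpr hx')
              obtain ⟨c2, s2, hC2, hlen2⟩ :=
                CEhelp.ext2 hCw hPnd hdisj hPc hPh hPl hcuz hcvz hchord
              have hle := hmaxC c2 s2 hC2
              have hPne : P ≠ [] := by intro h; rw [h] at hPh; simp at hPh
              have hP1 : 1 ≤ P.length := List.length_pos_iff.mpr hPne
              have hlrot : (a :: t).length = (cu :: w :: (X ++ cv :: w2 :: Y)).length :=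
                hrot.perm.length_eq
              omega
      have hIle := hindep I hIindep
      rw [hIcard] at hIle
      omega
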